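/- Let H be the group presented by ⟨e₀, e₁, e₂, e₃, e₄ ∣ e₁e₄⁻¹e₂⁻¹e₃e₁⁻¹e₀, e₃⁻¹e₀e₂e₁⁻¹e₃e₄⁻¹, e₂e₃⁻¹e₀⁻², e₂⁻¹e₁e₄², e₂⟩ (the four boundary relators of the dual 2-cells together with the tree relator e₂). Then H is isomorphic to G, via an isomorphism sending e₀ ↦ a, e₄ ↦ b, e₂ ↦ 1, e₃ ↦ a⁻², and e₁ ↦ b⁻². -/
import Mathlib


/-- The generator `a` of the free group on two generators. -/
def fa : FreeGroup (Fin 2) := FreeGroup.of 0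
/-- The generator `b` of the free group on two generators. -/
def fb : FreeGroup (Fin 2) := FreeGroup.of 1

/-- The two relators `(b·a²)·(a³·b²)⁻¹` and `(b²·a)·(a²·b³)⁻¹`. -/
def csRels : Set (FreeGroup (Fin 2)) :=
  {(fb * fa ^ 2) * (fa ^ 3 * fb ^ 2)⁻¹, (fb ^ 2 * fa) * (fa ^ 2 * fb ^ 3)⁻¹}

/-- The group `G = ⟨a, b ∣ b·a² = a³·b², b²·a = a²·b³⟩`. -/
abbrev G : Type := PresentedGroup csRels

/-- The image of `a` in `G`. -/
def ga : G := PresentedGroup.of 0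
/-- The image of `b` in `G`. -/
def gb : G := PresentedGroup.of 1

/-- The generators `e₀,…,e₄` of the free group on five generators. -/
def fe (i : Fin 5) : FreeGroup (Fin 5) := FreeGroup.of i

/-- The relators `e₁e₄⁻¹e₂⁻¹e₃e₁⁻¹e₀`, `e₃⁻¹e₀e₂e₁⁻¹e₃e₄⁻¹`, `e₂e₃⁻¹e₀⁻²`, `e₂⁻¹e₁e₄²`,
together with the tree relator `e₂`. -/
def dualRels : Set (FreeGroup (Fin 5)) :=
  {fe 1 * (fe 4)⁻¹ * (fe 2)⁻¹ * fe 3 * (fe 1)⁻¹ * fe 0,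
   (fe 3)⁻¹ * fe 0 * fe 2 * (fe 1)⁻¹ * fe 3 * (fe 4)⁻¹,
   fe 2 * (fe 3)⁻¹ * (fe 0)⁻¹ * (fe 0)⁻¹,
   (fe 2)⁻¹ * fe 1 * fe 4 * fe 4,
   fe 2}

/-- The group `H = ⟨e₀,…,e₄ ∣ e₁e₄⁻¹e₂⁻¹e₃e₁⁻¹e₀, e₃⁻¹e₀e₂e₁⁻¹e₃e₄⁻¹, e₂e₃⁻¹e₀⁻²,
e₂⁻¹e₁e₄², e₂⟩`. -/
abbrev H : Type := PresentedGroup dualRels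

lemma relator_one' {α : Type*} {rels : Set (FreeGroup α)} {r : FreeGroup α} (h : r ∈ rels) :
    PresentedGroup.mk rels r = 1 :=
  (QuotientGroup.eq_one_iff r).mpr (Subgroup.subset_normalClosure h)

lemma grel1 : gb * ga ^ 2 = ga ^ 3 * gb ^ 2 := by
  have h := relator_one' (show (fb * fa ^ 2) * (fa ^ 3 * fb ^ 2)⁻¹ ∈ csRels from Or.inl rfl)
  rw [map_mul, map_inv, mul_inv_eq_one] at h
  simpa [fa, fb, map_mul, map_pow, ga, gb, PresentedGroup.of] using h

lemma grel2 : gb ^ 2 * ga = ga ^ 2 * gb ^ 3 := by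
  have h := relator_one' (show (fb ^ 2 * fa) * (fa ^ 2 * fb ^ 3)⁻¹ ∈ csRels from Or.inr rfl)
  rw [map_mul, map_inv, mul_inv_eq_one] at h
  simpa [fa, fb, map_mul, map_pow, ga, gb, PresentedGroup.of] using h

local notation "E" i => (PresentedGroup.of i : H)

lemma hrel_e2 : (E (2:Fin 5)) = 1 := by
  have := relator_one' (show fe 2 ∈ dualRels by right;right;right;right;rfl)
  simpa [fe, PresentedGroup.of] using this

lemma hrel3 : (E (3:Fin 5)) = (E (0:Fin 5))⁻¹ * (E (0:Fin 5))⁻¹ := by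
  have this := relator_one' (show fe 2 * (fe 3)⁻¹ * (fe 0)⁻¹ * (fe 0)⁻¹ ∈ dualRels by
    right;right;left;rfl)
  simp only [fe, map_mul, map_inv] at this
  have h2 := hrel_e2
  simp only [PresentedGroup.of] at h2 ⊢
  rw [h2, one_mul, mul_assoc, inv_mul_eq_one] at this
  exact this

lemma hrel1 : (E (1:Fin 5)) = ((E (4:Fin 5)) * (E (4:Fin 5)))⁻¹ := by
  have this := relator_one' (show (fe 2)⁻¹ * fe 1 * fe 4 * fe 4 ∈ dualRels by
    right;right;right;left;rfl)
  simp only [fe, map_mul, map_inv] at this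
  have h2 := hrel_e2
  simp only [PresentedGroup.of] at h2 ⊢
  rw [h2, inv_one, one_mul, mul_assoc, mul_eq_one_iff_eq_inv] at this
  exact this

lemma hrelA : (E (4:Fin 5)) * (E (0:Fin 5)) ^ 2 = (E (0:Fin 5)) ^ 3 * (E (4:Fin 5)) ^ 2 := by
  have this := relator_one' (show (fe 3)⁻¹ * fe 0 * fe 2 * (fe 1)⁻¹ * fe 3 * (fe 4)⁻¹ ∈ dualRels
    by right;left;rfl)
  simp only [fe, map_mul, map_inv] at this
  have h1 := hrel1; have h2 := hrel_e2; have h3 := hrel3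
  simp only [PresentedGroup.of] at h1 h2 h3 ⊢
  rw [h1, h2, h3, mul_inv_eq_one] at this
  conv_lhs => rw [← this]
  group

lemma hrelB : (E (4:Fin 5)) ^ 2 * (E (0:Fin 5)) = (E (0:Fin 5)) ^ 2 * (E (4:Fin 5)) ^ 3 := by
  have this := relator_one' (show fe 1 * (fe 4)⁻¹ * (fe 2)⁻¹ * fe 3 * (fe 1)⁻¹ * fe 0 ∈ dualRels
    by left;rfl)
  simp only [fe, map_mul, map_inv] at this
  have h1 := hrel1; have h2 := hrel_e2; have h3 := hrel3
  simp only [PresentedGroup.of] at h1 h2 h3 ⊢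
  rw [h1, h2, h3, mul_eq_one_iff_eq_inv] at this
  have h0 := congrArg Inv.inv this
  simp only [inv_inv] at h0
  conv_lhs => rw [← h0]
  group

/-- The forward assignment. -/
def fG : Fin 5 → G := ![ga, (gb ^ 2)⁻¹, 1, (ga ^ 2)⁻¹, gb]

lemma relsG : ∀ r ∈ dualRels, FreeGroup.lift fG r = 1 := by
  rintro r (rfl | rfl | rfl | rfl | rfl) <;>
    simp only [fe, map_mul, map_inv, FreeGroup.lift_apply_of, fG, Matrix.cons_val_zero,
      Matrix.cons_val_one, Matrix.head_cons, Matrix.cons_val_two, Matrix.tail_cons,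
      Matrix.cons_val_three, Matrix.cons_val_four] <;> try group
  · calc (gb ^ 2)⁻¹ * gb⁻¹ * 1⁻¹ * (ga ^ 2)⁻¹ * ((gb ^ 2)⁻¹)⁻¹ * ga
        = (ga ^ 2 * gb ^ 3)⁻¹ * (gb ^ 2 * ga) := by group
      _ = 1 := by rw [← grel2]; group
  · calc ((ga ^ 2)⁻¹)⁻¹ * ga * 1 * ((gb ^ 2)⁻¹)⁻¹ * (ga ^ 2)⁻¹ * gb⁻¹
        = (ga ^ 3 * gb ^ 2) * (gb * ga ^ 2)⁻¹ := by group
      _ = 1 := by rw [← grel1]; group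

/-- The forward homomorphism `H →* G`. -/
def φH : H →* G := PresentedGroup.toGroup relsG

/-- The backward assignment. -/
def fH : Fin 2 → H := ![PresentedGroup.of 0, PresentedGroup.of 4]

lemma relsH : ∀ r ∈ csRels, FreeGroup.lift fH r = 1 := by
  rintro r (rfl | rfl) <;>
    simp only [fa, fb, map_mul, map_inv, map_pow, FreeGroup.lift_apply_of, fH,
      Matrix.cons_val_zero, Matrix.cons_val_one, Matrix.head_cons]
  · rw [hrelA]; group
  · rw [hrelB]; group

/-- The backward homomorphism `G →* H`. -/
def χG : G →* H := PresentedGroup.toGroup relsH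

/-- `H` is isomorphic to `G` via an isomorphism sending `e₀ ↦ a`, `e₁ ↦ b⁻²`, `e₂ ↦ 1`,
`e₃ ↦ a⁻²`, `e₄ ↦ b`. -/
theorem dual_presentation_iso :
    ∃ ψ : H ≃* G,
      ψ (PresentedGroup.of 0) = ga ∧
      ψ (PresentedGroup.of 1) = (gb ^ 2)⁻¹ ∧
      ψ (PresentedGroup.of 2) = 1 ∧
      ψ (PresentedGroup.of 3) = (ga ^ 2)⁻¹ ∧
      ψ (PresentedGroup.of 4) = gb := by
  have hφ : ∀ i, φH (PresentedGroup.of i) = fG i := fun i => PresentedGroup.toGroup.of relsG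
  have hχ : ∀ i, χG (PresentedGroup.of i) = fH i := fun i => PresentedGroup.toGroup.of relsH
  have hG0 : fG 0 = ga := rfl
  have hG1 : fG 1 = (gb ^ 2)⁻¹ := rfl
  have hG2 : fG 2 = 1 := rfl
  have hG3 : fG 3 = (ga ^ 2)⁻¹ := rfl
  have hG4 : fG 4 = gb := rfl
  have hH0 : fH 0 = PresentedGroup.of 0 := rfl
  have hH1 : fH 1 = PresentedGroup.of 4 := rfl
  refine ⟨MonoidHom.toMulEquiv φH χG ?_ ?_ , ?_, ?_, ?_, ?_, ?_⟩
  · ext i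
    fin_cases i
    · show χG (φH (PresentedGroup.of 0)) = PresentedGroup.of 0
      rw [hφ, hG0, ga, hχ 0, hH0]
    · show χG (φH (PresentedGroup.of 1)) = PresentedGroup.of 1
      rw [hφ, hG1, map_inv, map_pow, gb, hχ 1, hH1, hrel1]
      group
    · show χG (φH (PresentedGroup.of 2)) = PresentedGroup.of 2
      rw [hφ, hG2, map_one, hrel_e2]
    · show χG (φH (PresentedGroup.of 3)) = PresentedGroup.of 3
      rw [hφ, hG3, map_inv, map_pow, ga, hχ 0, hH0, hrel3]
      group
    · show χG (φH (PresentedGroup.of 4)) = PresentedGroup.of 4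
      rw [hφ, hG4, gb, hχ 1, hH1]
  · ext i
    fin_cases i
    · show φH (χG (PresentedGroup.of 0)) = PresentedGroup.of 0
      rw [hχ, hH0, hφ, hG0, ga]
    · show φH (χG (PresentedGroup.of 1)) = PresentedGroup.of 1
      rw [hχ, hH1, hφ, hG4, gb]
  · exact (hφ 0).trans hG0
  · exact (hφ 1).trans hG1
  · exact (hφ 2).trans hG2
  · exact (hφ 3).trans hG3
  · exact (hφ 4).trans hG4
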